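/- Degree-2 vertex connects to its two signal-weighted nearest neighbors: let ω be a marked configuration such that for a fixed point x₀ ∈ ω the signal-weighted order at x₀ is a strict total order, and suppose the SINR graph has maximum degree ≤ 2. If x₀ has degree exactly 2, then its two neighbors in the SINR graph are exactly V₁(x₀) and V₂(x₀), the first and second nearest neighbors of x₀ in signal-weighted order, i.e. the two points maximizing received power p ℓ(|x − x₀|) at x₀ (with distance tiebreaking). -/

import Mathlib

/-- A degree-2 vertex of an SINR graph (with `γ ≥ 1/(2τ)`, so that degrees are
bounded by 2) is connected exactly to its first and second nearest neighbors in the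
signal-weighted order at that vertex. -/
theorem degree_two_vertex_connects_to_signal_nearest_neighbors {d : ℕ} {ι : Type*} [Countable ι]
    (x : ι → EuclideanSpace ℝ (Fin d)) (p : ι → ℝ) (ℓ : ℝ → ℝ)
    (N₀ τ γ : ℝ) (hp : ∀ i, 0 ≤ p i) (hℓ : ∀ r, 0 ≤ ℓ r)
    (hN₀ : 0 ≤ N₀) (hτ : 0 < τ) (hγ : γ ≥ 1 / (2 * τ))
    (hsum : ∀ j, Summable fun k => p k * ℓ (dist (x k) (x j)))
    (edge : ι → ι → Prop)
    (hedge : ∀ i j, edge i j ↔ i ≠ j ∧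
      p i * ℓ (dist (x i) (x j)) >
        τ * (N₀ + γ * ∑' k : {k : ι // k ≠ i ∧ k ≠ j}, p k.1 * ℓ (dist (x k.1) (x j))) ∧
      p j * ℓ (dist (x i) (x j)) >
        τ * (N₀ + γ * ∑' k : {k : ι // k ≠ i ∧ k ≠ j}, p k.1 * ℓ (dist (x k.1) (x i))))
    (j₀ : ι)
    (stronger : ι → ι → Prop)
    (hstronger : ∀ a b, stronger a b ↔
      (p a * ℓ (dist (x a) (x j₀)) > p b * ℓ (dist (x b) (x j₀)) ∨
        (p a * ℓ (dist (x a) (x j₀)) = p b * ℓ (dist (x b) (x j₀)) ∧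
          dist (x a) (x j₀) < dist (x b) (x j₀))))
    (v1 v2 : ι) (hv1 : v1 ≠ j₀) (hv2 : v2 ≠ j₀) (hv12 : v1 ≠ v2)
    (hv1max : ∀ k, k ≠ j₀ → k ≠ v1 → stronger v1 k)
    (hv2max : ∀ k, k ≠ j₀ → k ≠ v1 → k ≠ v2 → stronger v2 k)
    (a b : ι) (hab : a ≠ b) (hea : edge a j₀) (heb : edge b j₀)
    (honly : ∀ k, edge k j₀ → k = a ∨ k = b) :
    (a = v1 ∧ b = v2) ∨ (a = v2 ∧ b = v1) := by
  classical
  by_contra hcon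
  push_neg at hcon
  obtain ⟨hc1, hc2⟩ := hcon
  set S : ι → ℝ := fun k => p k * ℓ (dist (x k) (x j₀)) with hS
  have hSnn : ∀ k, 0 ≤ S k := fun k => mul_nonneg (hp k) (hℓ _)
  have hSsum : Summable S := hsum j₀
  -- edge gives the SINR condition
  have haj : a ≠ j₀ := ((hedge a j₀).1 hea).1
  have hbj : b ≠ j₀ := ((hedge b j₀).1 heb).1
  set T : ℝ := ∑' k, S k with hT
  -- tsum over the complement subtype
  have hcompl : ∀ u : ι, u ≠ j₀ →
      (∑' k : {k : ι // k ≠ u ∧ k ≠ j₀}, S k.1) = T - S u - S j₀ := by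
    intro u hu
    have hset : {k : ι | k ≠ u ∧ k ≠ j₀} = {k : ι | k ∉ ({u, j₀} : Finset ι)} := by
      ext k; simp [not_or]
    have h1 : (∑' k : {k : ι // k ≠ u ∧ k ≠ j₀}, S k.1)
        = ∑' k : {k : ι // k ∉ ({u, j₀} : Finset ι)}, S k.1 := by
      calc (∑' k : {k : ι // k ≠ u ∧ k ≠ j₀}, S k.1)
          = ∑' k, Set.indicator {k : ι | k ≠ u ∧ k ≠ j₀} S k := tsum_subtype _ _
        _ = ∑' k, Set.indicator {k : ι | k ∉ ({u, j₀} : Finset ι)} S k := by rw [hset]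
        _ = ∑' k : {k : ι // k ∉ ({u, j₀} : Finset ι)}, S k.1 := (tsum_subtype _ _).symm
    have h2 := Summable.sum_add_tsum_subtype_compl hSsum ({u, j₀} : Finset ι)
    rw [Finset.sum_pair hu] at h2
    rw [h1]
    linarith [h2]
  -- the SINR condition for a node u at j₀
  have hcond : ∀ u : ι, edge u j₀ → S u > τ * (N₀ + γ * (T - S u - S j₀)) := by
    intro u hu
    have h := ((hedge u j₀).1 hu).2.1
    rwa [hcompl u ((hedge u j₀).1 hu).1] at h
  -- find a third node v ∉ {a, b}, v ≠ j₀, at least as strong as some node with an edge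
  have key : ∃ v c : ι, v ≠ a ∧ v ≠ b ∧ v ≠ j₀ ∧ stronger v c ∧ edge c j₀ := by
    by_cases ha1 : a = v1
    · have hbne2 : b ≠ v2 := hc1 ha1
      have hbne1 : b ≠ v1 := fun h => hab (ha1.trans h.symm)
      refine ⟨v2, b, ?_, fun h => hbne2 h.symm, hv2, hv2max b hbj hbne1 hbne2, heb⟩
      rw [ha1]; exact fun h => hv12 h.symm
    · by_cases ha2 : a = v2
      · have hbne1 : b ≠ v1 := hc2 ha2
        refine ⟨v1, b, ?_, fun h => hbne1 h.symm, hv1, hv1max b hbj hbne1, heb⟩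
        rw [ha2]; exact hv12
      · by_cases hb1 : b = v1
        · refine ⟨v2, a, fun h => ha2 h.symm, ?_, hv2, hv2max a haj ha1 ha2, hea⟩
          rw [hb1]; exact fun h => hv12 h.symm
        · exact ⟨v1, a, fun h => ha1 h.symm, fun h => hb1 h.symm, hv1,
            hv1max a haj ha1, hea⟩
  obtain ⟨v, c, hva, hvb, hvj, hstr, hec⟩ := key
  have hcge : S v ≥ S c := by
    rcases (hstronger v c).1 hstr with h | ⟨h, _⟩
    · exact le_of_lt h
    · exact le_of_eq h.symm
  have hγ' : (0:ℝ) < γ := lt_of_lt_of_le (by positivity) hγ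
  have hcS : S c > τ * (N₀ + γ * (T - S c - S j₀)) := hcond c hec
  have hvS : S v > τ * (N₀ + γ * (T - S v - S j₀)) := by
    nlinarith [mul_nonneg hτ.le hγ'.le]
  have haS : S a > τ * (N₀ + γ * (T - S a - S j₀)) := hcond a hea
  have hbS : S b > τ * (N₀ + γ * (T - S b - S j₀)) := hcond b heb
  -- the three values plus S j₀ are at most T
  have hle : S a + S b + S v + S j₀ ≤ T := by
    have hsub : ({a, b, v, j₀} : Finset ι).sum S ≤ T :=
      Summable.sum_le_tsum _ (fun k _ => hSnn k) hSsum
    rwa [Finset.sum_insert (by simp [hab, hva.symm, haj]),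
      Finset.sum_insert (by simp [hvb.symm, hbj]),
      Finset.sum_insert (by simp [hvj]), Finset.sum_singleton, ← add_assoc, ← add_assoc] at hsub
  -- 2τγ ≥ 1
  have htg : 1 ≤ 2 * (τ * γ) := by
    rw [ge_iff_le, div_le_iff₀ (by positivity)] at hγ
    nlinarith
  nlinarith [hSnn a, hSnn b, hSnn v, mul_nonneg hτ.le hγ'.le,
    mul_nonneg (mul_nonneg hτ.le hγ'.le) (hSnn a),
    mul_nonneg (mul_nonneg hτ.le hγ'.le) (hSnn b),
    mul_nonneg (mul_nonneg hτ.le hγ'.le) (hSnn v)]
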